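/- Let G(X,Y) be a bipartite graph with a perfect matching M. Form the directed graph D by orienting every edge of G from Y to X and adding, for each matching edge (x, y) ∈ M, a directed edge from x to y. Then an edge e of G lies in some perfect matching of G if and only if its two endpoints lie in the same strongly connected component of D. -/

import Mathlib

private lemma exists_nodup_chain_aux {α : Type*} (r : α → α → Prop) :
    ∀ (k : ℕ) (l : List α) (a : α), l.length ≤ k → List.Chain r a l →
      ∃ l', List.Chain r a l' ∧ l' ⊆ l ∧ (a :: l').Nodup ∧
        (a :: l').getLast (List.cons_ne_nil _ _) = (a :: l).getLast (List.cons_ne_nil _ _) := by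
  intro k
  induction k with
  | zero =>
    intro l a hl _
    have : l = [] := List.eq_nil_of_length_eq_zero (Nat.le_zero.mp hl)
    subst this
    exact ⟨[], List.Chain.nil, by simp, by simp, rfl⟩
  | succ k ih =>
    intro l a hl hchain
    by_cases ha : a ∈ l
    · obtain ⟨l₁, l₂, rfl⟩ := List.append_of_mem ha
      have h2 : List.Chain r a l₂ := (List.isChain_cons_split.mp hchain).2
      have hlen : l₂.length ≤ k := by
        have := hl
        simp only [List.length_append, List.length_cons] at this
        omega
      obtain ⟨l', hc, hsub, hnd, hlast⟩ := ih l₂ a hlen h2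
      have hcongr : ∀ (L1 L2 : List α) (h1 : L1 ≠ []) (h2 : L2 ≠ []),
          L1 = L2 → L1.getLast h1 = L2.getLast h2 := by
        rintro L1 L2 h1 h2 rfl; rfl
      refine ⟨l', hc, fun z hz => by simp [hsub hz], hnd, ?_⟩
      rw [hlast]
      exact (List.getLast_append_of_ne_nil (l := a :: l₁) (l' := a :: l₂) (by simp) (List.cons_ne_nil _ _)).symm.trans
        (hcongr _ _ _ _ (by simp))
    · cases l with
      | nil => exact ⟨[], List.Chain.nil, by simp, by simp, rfl⟩
      | cons c t =>
        replace hchain := List.isChain_cons_cons.mp hchain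
        have hlen : t.length ≤ k := by simp at hl; omega
        obtain ⟨l', hc, hsub, hnd, hlast⟩ := ih t c hlen hchain.2
        refine ⟨c :: l', List.chain_cons.mpr ⟨hchain.1, hc⟩,
          fun z hz => by
            rcases List.mem_cons.mp hz with h | h
            · simp [h]
            · simp [hsub h], ?_, ?_⟩
        · refine List.nodup_cons.mpr ⟨?_, hnd⟩
          intro hmem
          apply ha
          rcases List.mem_cons.mp hmem with h | h
          · simp [h]
          · exact List.mem_cons_of_mem _ (hsub h)
        · rw [List.getLast_cons_cons, List.getLast_cons_cons, hlast]

private lemma exists_nodup_chain {α : Type*} (r : α → α → Prop) (l : List α) (a : α)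
    (hchain : List.Chain r a l) :
    ∃ l', List.Chain r a l' ∧ l' ⊆ l ∧ (a :: l').Nodup ∧
      (a :: l').getLast (List.cons_ne_nil _ _) = (a :: l).getLast (List.cons_ne_nil _ _) :=
  exists_nodup_chain_aux r l.length l a le_rfl hchain

private lemma build_matching (n : ℕ) (A : Fin n → Fin n → Prop)
    (M : Equiv.Perm (Fin n)) (hM : ∀ i, A i (M i)) :
    ∀ (l : List (Fin n)) (a : Fin n),
      List.Chain (fun u v => A v (M u)) a l → (a :: l).Nodup →
      ∃ N : Equiv.Perm (Fin n), (∀ i, i ≠ a → A i (N i)) ∧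
        N a = M ((a :: l).getLast (List.cons_ne_nil _ _)) ∧
        (∀ i, i ∉ a :: l → N i = M i) := by
  intro l
  induction l with
  | nil =>
    intro a _ _
    exact ⟨M, fun i _ => hM i, rfl, fun i _ => rfl⟩
  | cons b t ih =>
    intro a hchain hnd
    replace hchain := List.isChain_cons_cons.mp hchain
    have hnd' : (b :: t).Nodup := (List.nodup_cons.mp hnd).2
    have hanotin : a ∉ b :: t := (List.nodup_cons.mp hnd).1
    obtain ⟨N, hvalid, hNb, hNout⟩ := ih b hchain.2 hnd'
    refine ⟨(Equiv.swap a b).trans N, ?_, ?_, ?_⟩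
    · intro i hi
      by_cases hib : i = b
      · rw [hib]
        have h1 : (Equiv.swap a b).trans N b = N a := by simp [Equiv.swap_apply_right]
        rw [h1, hNout a hanotin]
        exact hchain.1
      · have : (Equiv.swap a b).trans N i = N i := by
          simp [Equiv.swap_apply_of_ne_of_ne hi hib]
        rw [this]
        exact hvalid i hib
    · have : (Equiv.swap a b).trans N a = N b := by simp [Equiv.swap_apply_left]
      rw [this, hNb, List.getLast_cons_cons]
    · intro i hi
      have hia : i ≠ a := fun h => hi (h ▸ List.mem_cons_self)
      have hib : i ≠ b := fun h => hi (h ▸ List.mem_cons_of_mem _ (List.mem_cons_self))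
      have hit : i ∉ b :: t := fun h => hi (List.mem_cons_of_mem _ h)
      have : (Equiv.swap a b).trans N i = N i := by
        simp [Equiv.swap_apply_of_ne_of_ne hia hib]
      rw [this, hNout i hit]

/-- Dulmage–Mendelsohn type characterization of extendable edges: fix a perfect matching
`M` of a bipartite graph `G(X,Y)` and orient every edge of `G` from `Y` to `X`, adding for
each matching edge `(x, M x)` an arc from `x` to `M x`.  Then an edge `(x, y)` of `G` lies
in some perfect matching iff `x` (in `X`) and `y` (in `Y`) lie in the same strongly
connected component of the resulting digraph. -/
theorem extendable_iff_same_scc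
    (n : ℕ) (A : Fin n → Fin n → Prop)
    (M : Equiv.Perm (Fin n)) (hM : ∀ i, A i (M i))
    (D : (Fin n ⊕ Fin n) → (Fin n ⊕ Fin n) → Prop)
    (hD : ∀ u v, D u v ↔
      ((∃ x y, A x y ∧ u = Sum.inr y ∧ v = Sum.inl x) ∨
        (∃ x, u = Sum.inl x ∧ v = Sum.inr (M x))))
    (x y : Fin n) (hxy : A x y) :
    (∃ M' : Equiv.Perm (Fin n), (∀ i, A i (M' i)) ∧ M' x = y) ↔
      (Relation.ReflTransGen D (Sum.inl x) (Sum.inr y) ∧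
        Relation.ReflTransGen D (Sum.inr y) (Sum.inl x)) := by
  constructor
  · rintro ⟨M', hM', hMx⟩
    have back : Relation.ReflTransGen D (Sum.inr y) (Sum.inl x) :=
      Relation.ReflTransGen.single ((hD _ _).mpr (Or.inl ⟨x, y, hxy, rfl, rfl⟩))
    refine ⟨?_, back⟩
    set g : Equiv.Perm (Fin n) := M.trans M'.symm with hg
    have hstep : ∀ i : Fin n, Relation.ReflTransGen D (Sum.inl i) (Sum.inl (g i)) := by
      intro i
      have h1 : D (Sum.inl i) (Sum.inr (M i)) := (hD _ _).mpr (Or.inr ⟨i, rfl, rfl⟩)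
      have h2 : D (Sum.inr (M i)) (Sum.inl (g i)) := by
        refine (hD _ _).mpr (Or.inl ⟨g i, M i, ?_, rfl, rfl⟩)
        have : M' (g i) = M i := by simp [hg]
        have := hM' (g i)
        rwa [‹M' (g i) = M i›] at this
      exact Relation.ReflTransGen.tail (Relation.ReflTransGen.single h1) h2
    have hiter : ∀ k : ℕ, Relation.ReflTransGen D (Sum.inl x) (Sum.inl ((g ^ k) x)) := by
      intro k
      induction k with
      | zero =>
        simp only [pow_zero, Equiv.Perm.one_apply]
        exact Relation.ReflTransGen.refl
      | succ k ih =>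
        have h0 : (g ^ (k + 1)) x = g ((g ^ k) x) := by
          rw [pow_succ', Equiv.Perm.mul_apply]
        rw [h0]
        exact ih.trans (hstep _)
    have hk : 0 < orderOf g := orderOf_pos g
    obtain ⟨m, hm⟩ : ∃ m, orderOf g = m + 1 := ⟨orderOf g - 1, by omega⟩
    have hpath := hiter m
    have hval : M ((g ^ m) x) = y := by
      have h1 : g ((g ^ m) x) = x := by
        have h0 : (g ^ (m + 1)) x = g ((g ^ m) x) := by
          rw [pow_succ', Equiv.Perm.mul_apply]
        rw [← h0, ← hm, pow_orderOf_eq_one, Equiv.Perm.one_apply]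
      have h2 : M'.symm (M ((g ^ m) x)) = x := h1
      have := congrArg M' h2
      rw [Equiv.apply_symm_apply] at this
      rw [this, hMx]
    have hlast : D (Sum.inl ((g ^ m) x)) (Sum.inr y) := by
      refine (hD _ _).mpr (Or.inr ⟨(g ^ m) x, rfl, ?_⟩)
      rw [hval]
    exact hpath.tail hlast
  · rintro ⟨h1, _⟩
    set R : Fin n → Fin n → Prop := fun u v => A v (M u) with hR
    have key : ∀ v, Relation.ReflTransGen D (Sum.inl x) v →
        (∀ b, v = Sum.inl b → Relation.ReflTransGen R x b) ∧
        (∀ b, v = Sum.inr b → Relation.ReflTransGen R x (M.symm b)) := by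
      intro v h
      induction h with
      | refl =>
        constructor
        · rintro b hb
          rcases Sum.inl.inj hb with rfl
          exact Relation.ReflTransGen.refl
        · rintro b hb
          exact absurd hb (by simp)
      | tail _ step ih =>
        rcases (hD _ _).mp step with ⟨x₁, y₁, hA, hu, hv⟩ | ⟨x₁, hu, hv⟩
        · subst hu; subst hv
          constructor
          · rintro b hb
            rcases Sum.inl.inj hb with rfl
            refine (ih.2 y₁ rfl).tail ?_
            show A _ (M (M.symm y₁))
            rwa [Equiv.apply_symm_apply]
          · rintro b hb; exact absurd hb (by simp)
        · subst hu; subst hv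
          constructor
          · rintro b hb; exact absurd hb (by simp)
          · rintro b hb
            rcases Sum.inr.inj hb with rfl
            simpa using ih.1 x₁ rfl
    have hRx : Relation.ReflTransGen R x (M.symm y) := (key _ h1).2 y rfl
    obtain ⟨l, hchain, hlast⟩ := List.exists_isChain_cons_of_relationReflTransGen hRx
    obtain ⟨l', hchain', _, hnd, hlast'⟩ := exists_nodup_chain R l x hchain
    obtain ⟨N, hvalid, hNx, _⟩ := build_matching n A M hM l' x hchain' hnd
    refine ⟨N, ?_, ?_⟩
    · intro i
      by_cases hix : i = x
      · subst hix
        rw [hNx, hlast', hlast, Equiv.apply_symm_apply]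
        exact hxy
      · exact hvalid i hix
    · rw [hNx, hlast', hlast, Equiv.apply_symm_apply]
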